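/- For odd k and n ≥ (k+1)/2, the join of K_{(k−1)/2} with an independent set of n − (k−1)/2 vertices contains no linear forest with k edges, and the number of its s-cliques equals C((k+1)/2, s) + (n − (k+1)/2)·C((k−1)/2, s−1). -/

import Mathlib

open SimpleGraph Finset

/-- `G` contains a linear forest with `k` edges: a subgraph that is acyclic
with maximum degree at most 2 and exactly `k` edges. -/
def containsLinearForest {V : Type*} (G : SimpleGraph V) (k : ℕ) : Prop :=
  ∃ H : SimpleGraph V, H ≤ G ∧ H.IsAcyclic ∧ (∀ v, (H.neighborSet v).ncard ≤ 2) ∧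
    H.edgeSet.ncard = k

/-- `G` contains a matching with `k` edges. -/
def containsMatching {V : Type*} (G : SimpleGraph V) (k : ℕ) : Prop :=
  ∃ H : SimpleGraph V, H ≤ G ∧ (∀ v, (H.neighborSet v).ncard ≤ 1) ∧ H.edgeSet.ncard = k

/-- Number of `s`-cliques (copies of `K_s`) in `G`. -/
noncomputable def cliqueCount {V : Type*} (G : SimpleGraph V) (s : ℕ) : ℕ :=
  {S : Finset V | G.IsNClique s S}.ncard

/-- Number of copies of `K*_{s,t}` in `G`: pairs `(W₁, W₂)` of disjoint vertex sets with
`|W₁| = s`, `|W₂| = t`, `W₁` a clique and all `W₁`–`W₂` edges present. -/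
noncomputable def kstCount {V : Type*} (G : SimpleGraph V) (s t : ℕ) : ℕ :=
  {p : Finset V × Finset V | p.1.card = s ∧ p.2.card = t ∧ Disjoint p.1 p.2 ∧
    G.IsClique (p.1 : Set V) ∧ ∀ a ∈ p.1, ∀ b ∈ p.2, G.Adj a b}.ncard

/-- The join `K_a ∨ E_{n-a}`, realized on `Fin n` with the clique on the first `a` vertices. -/
def joinGraph (n a : ℕ) : SimpleGraph (Fin n) where
  Adj x y := x ≠ y ∧ ((x : ℕ) < a ∨ (y : ℕ) < a)
  symm := ⟨by rintro x y ⟨h1, h2⟩; exact ⟨h1.symm, by tauto⟩⟩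
  loopless := ⟨by rintro x ⟨h1, -⟩; exact h1 rfl⟩

lemma aux1 (n m : ℕ) (hmn : m ≤ n) (H : SimpleGraph (Fin n))
    (hle : H ≤ joinGraph n m) (hdeg : ∀ v, (H.neighborSet v).ncard ≤ 2) :
    H.edgeSet.ncard ≤ 2 * m := by
  classical
  let A : Finset (Fin n) := univ.filter (fun v => (v : ℕ) < m)
  have hA : A.card = m := by
    rw [← Finset.card_image_of_injective _ Fin.val_injective]
    have : A.image Fin.val = Finset.range m := by
      ext x; simp [A, Fin.exists_iff]; omega
    rw [this, Finset.card_range]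
  have hsub : H.edgeFinset ⊆ A.biUnion (fun v => H.incidenceFinset v) := by
    intro e he
    induction e using Sym2.ind with
    | _ x y =>
      rw [mem_edgeFinset, mem_edgeSet] at he
      have := hle he
      rcases this.2 with h | h
      · exact Finset.mem_biUnion.2 ⟨x, by simp [A, h],
          by rw [mem_incidenceFinset]; exact ⟨he, Sym2.mem_mk_left x y⟩⟩
      · exact Finset.mem_biUnion.2 ⟨y, by simp [A, h],
          by rw [mem_incidenceFinset]; exact ⟨he, Sym2.mem_mk_right x y⟩⟩
  have hcard : H.edgeFinset.card ≤ ∑ v ∈ A, (H.incidenceFinset v).card :=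
    le_trans (Finset.card_le_card hsub) (Finset.card_biUnion_le)
  have hdeg' : ∀ v, (H.incidenceFinset v).card ≤ 2 := by
    intro v
    rw [H.card_incidenceFinset_eq_degree]
    have := hdeg v
    rwa [Set.ncard_eq_toFinset_card'] at this
  have : H.edgeFinset.card ≤ 2 * m := by
    calc H.edgeFinset.card ≤ ∑ v ∈ A, (H.incidenceFinset v).card := hcard
    _ ≤ ∑ _v ∈ A, 2 := Finset.sum_le_sum (fun v _ => hdeg' v)
    _ = 2 * m := by rw [Finset.sum_const, hA]; ring
  rwa [Set.ncard_eq_toFinset_card', ← SimpleGraph.edgeFinset] at *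

lemma aux2 (n m t : ℕ) (hmn : m ≤ n) :
    cliqueCount (joinGraph n m) (t + 1) =
      Nat.choose m (t + 1) + (n - m) * Nat.choose m t := by
  classical
  set G := joinGraph n m with hG
  let A : Finset (Fin n) := univ.filter (fun v : Fin n => (v : ℕ) < m)
  let B : Finset (Fin n) := univ.filter (fun v : Fin n => ¬ (v : ℕ) < m)
  have hA : A.card = m := by
    rw [← Finset.card_image_of_injective _ Fin.val_injective]
    have : A.image Fin.val = Finset.range m := by
      ext x; simp [A, Fin.exists_iff]; omega
    rw [this, Finset.card_range]
  have hB : B.card = n - m := by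
    rw [← Finset.card_image_of_injective _ Fin.val_injective]
    have : B.image Fin.val = (Finset.range n).filter (fun x => ¬ x < m) := by
      ext x; simp [B, Fin.exists_iff]; omega
    rw [this]
    rw [Finset.filter_not, Finset.card_sdiff_of_subset (Finset.filter_subset _ _), Finset.card_range]
    congr 1
    rw [← Finset.card_range m]
    congr 1
    ext x; simp; omega
  -- the set of cliques as a finset
  have hcc : cliqueCount G (t + 1)
      = ((univ : Finset (Finset (Fin n))).filter (fun S => G.IsNClique (t + 1) S)).card := by
    rw [cliqueCount, ← Set.ncard_coe_finset]
    congr 1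
    ext S; simp
  let C0 : Finset (Finset (Fin n)) := A.powersetCard (t + 1)
  let C1 : Finset (Finset (Fin n)) :=
    (B ×ˢ A.powersetCard t).image (fun p => insert p.1 p.2)
  have key : (univ : Finset (Finset (Fin n))).filter (fun S => G.IsNClique (t + 1) S)
      = C0 ∪ C1 := by
    ext S
    simp only [Finset.mem_filter, Finset.mem_univ, true_and, Finset.mem_union]
    constructor
    · rintro ⟨hcl, hcard⟩
      by_cases hsub : S ⊆ A
      · left; exact Finset.mem_powersetCard.2 ⟨hsub, hcard⟩
      · right
        obtain ⟨b, hbS, hbA⟩ := Finset.not_subset.1 hsub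
        have hbm : ¬ (b : ℕ) < m := by simpa [A] using hbA
        refine Finset.mem_image.2 ⟨(b, S.erase b), ?_, ?_⟩
        · rw [Finset.mem_product]
          refine ⟨by simp [B]; omega, Finset.mem_powersetCard.2 ⟨?_, ?_⟩⟩
          · intro x hx
            obtain ⟨hxb, hxS⟩ := Finset.mem_erase.1 hx
            by_contra hxA
            have hxm : ¬ (x : ℕ) < m := by simpa [A] using hxA
            have := hcl hxS hbS hxb
            rw [hG] at this
            exact (this.2.elim hxm hbm)
          · rw [Finset.card_erase_of_mem hbS, hcard]; rfl
        · simp [Finset.insert_erase hbS]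
    · rintro (h | h)
      · obtain ⟨hsub, hcard⟩ := Finset.mem_powersetCard.1 h
        refine ⟨?_, hcard⟩
        intro x hx y hy hxy
        have hxm : (x : ℕ) < m := by simpa [A] using hsub hx
        exact ⟨hxy, Or.inl hxm⟩
      · obtain ⟨⟨b, T⟩, hp, rfl⟩ := Finset.mem_image.1 h
        rw [Finset.mem_product] at hp
        obtain ⟨hbB, hT⟩ := hp
        obtain ⟨hTA, hTcard⟩ := Finset.mem_powersetCard.1 hT
        have hbm : ¬ (b : ℕ) < m := by simpa [B] using hbB
        have hbT : b ∉ T := fun hbT => hbm (by simpa [A] using hTA hbT)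
        constructor
        · intro x hx y hy hxy
          simp only [Finset.coe_insert, Set.mem_insert_iff, Finset.mem_coe] at hx hy
          rcases hx with rfl | hx
          · rcases hy with rfl | hy
            · exact absurd rfl hxy
            · exact ⟨hxy, Or.inr (by simpa [A] using hTA hy)⟩
          · rcases hy with rfl | hy
            · exact ⟨hxy, Or.inl (by simpa [A] using hTA hx)⟩
            · exact ⟨hxy, Or.inl (by simpa [A] using hTA hx)⟩
        · rw [Finset.card_insert_of_notMem hbT, hTcard]
  have hdisj : Disjoint C0 C1 := by
    rw [Finset.disjoint_left]
    intro S hS0 hS1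
    obtain ⟨hsub, _⟩ := Finset.mem_powersetCard.1 hS0
    obtain ⟨⟨b, T⟩, hp, rfl⟩ := Finset.mem_image.1 hS1
    rw [Finset.mem_product] at hp
    have hbm : ¬ (b : ℕ) < m := by simpa [B] using hp.1
    exact hbm (by simpa [A] using hsub (Finset.mem_insert_self b T))
  have hC0 : C0.card = Nat.choose m (t + 1) := by
    rw [Finset.card_powersetCard, hA]
  have hC1 : C1.card = (n - m) * Nat.choose m t := by
    have hinj : Set.InjOn (fun p : Fin n × Finset (Fin n) => insert p.1 p.2)
        ↑(B ×ˢ A.powersetCard t) := by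
      rintro ⟨b, T⟩ hp ⟨b', T'⟩ hp' heq
      simp only [Finset.coe_product, Set.mem_prod, Finset.mem_coe] at hp hp'
      have hbm : ¬ (b : ℕ) < m := by simpa [B] using hp.1
      have hbm' : ¬ (b' : ℕ) < m := by simpa [B] using hp'.1
      have hTA := (Finset.mem_powersetCard.1 hp.2).1
      have hTA' := (Finset.mem_powersetCard.1 hp'.2).1
      have hbT : b ∉ T := fun h => hbm (by simpa [A] using hTA h)
      have hbT' : b' ∉ T' := fun h => hbm' (by simpa [A] using hTA' h)
      simp only at heq
      have hbb : b = b' := by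
        have : b ∈ insert b' T' := heq ▸ Finset.mem_insert_self b T
        rcases Finset.mem_insert.1 this with h | h
        · exact h
        · exact absurd (by simpa [A] using hTA' h) hbm
      subst hbb
      have : T = T' := by
        have h1 : (insert b T).erase b = (insert b T').erase b := by rw [heq]
        rwa [Finset.erase_insert hbT, Finset.erase_insert hbT'] at h1
      rw [this]
    rw [Finset.card_image_of_injOn hinj, Finset.card_product, hB,
      Finset.card_powersetCard, hA]
  rw [hcc, key, Finset.card_union_of_disjoint hdisj, hC0, hC1]

/-- For odd `k` and `n ≥ (k+1)/2`, the join `K_{(k-1)/2} ∨ E_{n-(k-1)/2}` contains no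
linear forest with `k` edges, and its number of `s`-cliques (`s ≥ 1`) equals
`C((k+1)/2, s) + (n-(k+1)/2)·C((k-1)/2, s-1)`. -/
theorem stmt7 (n k s : ℕ) (hk : Odd k) (hn : (k + 1) / 2 ≤ n) (hs : 1 ≤ s) :
    ¬ containsLinearForest (joinGraph n ((k - 1) / 2)) k ∧
    cliqueCount (joinGraph n ((k - 1) / 2)) s =
      Nat.choose ((k + 1) / 2) s + (n - (k + 1) / 2) * Nat.choose ((k - 1) / 2) (s - 1) := by
  obtain ⟨m, hkm⟩ := hk
  subst hkm
  have h1 : (2 * m + 1 - 1) / 2 = m := by omega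
  have h2 : (2 * m + 1 + 1) / 2 = m + 1 := by omega
  rw [h2] at hn
  rw [h1, h2]
  constructor
  · rintro ⟨H, hle, -, hdeg, hcard⟩
    have := aux1 n m (by omega) H hle hdeg
    omega
  · obtain ⟨t, rfl⟩ : ∃ t, s = t + 1 := ⟨s - 1, by omega⟩
    rw [aux2 n m t (by omega)]
    simp only [Nat.add_sub_cancel]
    rw [Nat.choose_succ_succ m t]
    have hnm : n - m = (n - (m + 1)) + 1 := by omega
    rw [hnm]
    ring
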